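/- arXiv:1212.6498 — 2 statements merged into one kernel-verified Lean document; each statement's English description precedes it below -/
import Mathlib

section
/- Every element x of a cosimplicial set X in cosimplicial degree q can be written uniquely as x = D(y) where D is a composition of coface maps (i.e. X applied to a monotone injection) and y ∈ X^p (p ≤ q) is not itself in the image of any coface map. Moreover the injection D ∈ Δ(p,q) is unique unless p = 0 and d^0 y = d^1 y, in which case D(y) = D'(y) for all injections D, D' ∈ Δ(0,q). -/
/-!
STATEMENT 2: Every element `x` of a cosimplicial set `X` in cosimplicial degree `q` can be
written uniquely as `x = D(y)` with `D` (the image under `X` of) a monotone injection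
`[p] → [q]` (a composition of coface maps) and `y ∈ X^p` not itself a coface.  Moreover the
injection `D ∈ Δ(p,q)` is unique unless `p = 0` and `d^0 y = d^1 y`, in which case
`D(y) = D'(y)` for all injections `D, D' ∈ Δ(0,q)`.
-/

open CategoryTheory

/-- An element `y ∈ X^p` is *not a coface* if it is not in the image of `X(f)` for any
non-identity monotone injection `f : [p'] → [p]` (equivalently, for any injective
monotone map from a strictly smaller object). -/
def NotCoface (X : CosimplicialObject (Type)) {p : ℕ}
    (y : X.obj (SimplexCategory.mk p)) : Prop :=
  ∀ (p' : ℕ), p' < p → ∀ (f : SimplexCategory.mk p' ⟶ SimplexCategory.mk p),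
    Function.Injective f.toOrderHom → ∀ z, X.map f z ≠ y


open SimplexCategory

section AuxLemmas

lemma my_map_comp_apply (X : CosimplicialObject (Type)) {a b c : SimplexCategory} (f : a ⟶ b) (g : b ⟶ c) (z : X.obj a) :
    X.map (f ≫ g) z = X.map g (X.map f z) :=
  FunctorToTypes.map_comp_apply X f g z

lemma my_map_id_apply (X : CosimplicialObject (Type)) {a : SimplexCategory} (z : X.obj a) :
    X.map (𝟙 a) z = z :=
  FunctorToTypes.map_id_apply X z

lemma succAbove_val {n : ℕ} (m : Fin (n + 2)) (j : Fin (n + 1)) :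
    (m.succAbove j : ℕ) = if (j : ℕ) < (m : ℕ) then (j : ℕ) else (j : ℕ) + 1 := by
  rw [Fin.succAbove]
  split_ifs with h h' h'
  · rfl
  · exact absurd h h'
  · exact absurd h' h
  · rfl

lemma predAbove_val {n : ℕ} (j : Fin (n + 1)) (k : Fin (n + 2)) :
    (j.predAbove k : ℕ) = if (k : ℕ) ≤ (j : ℕ) then (k : ℕ) else (k : ℕ) - 1 := by
  rw [Fin.predAbove]
  split_ifs with h h' h'
  · simp [Fin.lt_def] at h; omega
  · rfl
  · rfl
  · simp [Fin.lt_def, Fin.le_def] at h h' ⊢; omega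


/-- retraction of a strictly monotone map of `Fin`s -/
def retr {p q : ℕ} (f : Fin (p + 1) →o Fin (q + 1)) : Fin (q + 1) →o Fin (p + 1) where
  toFun k := (insert 0 (Finset.univ.filter fun j => f j ≤ k)).max' ⟨0, Finset.mem_insert_self _ _⟩
  monotone' := by
    intro k k' hk
    refine Finset.max'_subset _ ?_
    intro j hj
    rcases Finset.mem_insert.mp hj with h | h
    · exact h ▸ Finset.mem_insert_self _ _
    · refine Finset.mem_insert_of_mem (Finset.mem_filter.mpr ⟨Finset.mem_univ _, ?_⟩)
      exact le_trans (Finset.mem_filter.mp h).2 hk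

set_option maxHeartbeats 1000000 in
lemma retr_apply {p q : ℕ} (f : Fin (p + 1) →o Fin (q + 1)) (hsm : StrictMono f)
    (j : Fin (p + 1)) : retr f (f j) = j := by
  have h1 : retr f (f j) =
      (insert 0 (Finset.univ.filter fun i => f i ≤ f j)).max' ⟨0, Finset.mem_insert_self _ _⟩ :=
    rfl
  rw [h1]
  apply le_antisymm
  · apply Finset.max'_le
    intro i hi
    simp only [Finset.mem_insert, Finset.mem_filter, Finset.mem_univ, true_and] at hi
    rcases hi with h | h
    · exact h ▸ Fin.zero_le _
    · exact hsm.le_iff_le.mp h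
  · apply Finset.le_max'
    simp only [Finset.mem_insert, Finset.mem_filter, Finset.mem_univ, true_and]
    exact Or.inr le_rfl

lemma exists_retraction {p q : ℕ} (D : SimplexCategory.mk p ⟶ SimplexCategory.mk q)
    (hD : Function.Injective D.toOrderHom) :
    ∃ r : SimplexCategory.mk q ⟶ SimplexCategory.mk p, D ≫ r = 𝟙 _ := by
  have hsm : StrictMono D.toOrderHom := D.toOrderHom.monotone.strictMono_of_injective hD
  refine ⟨SimplexCategory.mkHom (retr D.toOrderHom), ?_⟩
  apply SimplexCategory.Hom.ext
  ext j
  exact congrArg Fin.val (retr_apply D.toOrderHom hsm j)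

lemma surjective_of_map_eq (X : CosimplicialObject (Type)) {a p : ℕ}
    {y : X.obj (SimplexCategory.mk p)} (hy : NotCoface X y)
    (φ : SimplexCategory.mk a ⟶ SimplexCategory.mk p) (z : X.obj (SimplexCategory.mk a))
    (hz : X.map φ z = y) : Function.Surjective φ.toOrderHom := by
  cases p with
  | zero => exact fun b => ⟨0, Subsingleton.elim (α := Fin 1) _ _⟩
  | succ n =>
    by_contra h
    obtain ⟨i, θ', hθ⟩ := SimplexCategory.eq_comp_δ_of_not_surjective φ h
    refine hy n (Nat.lt_succ_self n) (SimplexCategory.δ i)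
      (SimplexCategory.mono_iff_injective.mp inferInstance) (X.map θ' z) ?_
    rw [← my_map_comp_apply, ← hθ, hz]

lemma eq_id_of_map_eq (X : CosimplicialObject (Type)) {p : ℕ}
    {y : X.obj (SimplexCategory.mk p)} (hy : NotCoface X y)
    (φ : SimplexCategory.mk p ⟶ SimplexCategory.mk p) (z : X.obj (SimplexCategory.mk p))
    (hz : X.map φ z = y) : φ = 𝟙 _ := by
  haveI : Epi φ := SimplexCategory.epi_iff_surjective.mpr (surjective_of_map_eq X hy φ z hz)
  exact SimplexCategory.eq_id_of_epi φ

lemma retraction_transfer (X : CosimplicialObject (Type)) {p n : ℕ}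
    (φ ψ : SimplexCategory.mk p ⟶ SimplexCategory.mk n) (y : X.obj (SimplexCategory.mk p))
    (hy : NotCoface X y) (h : X.map φ y = X.map ψ y)
    (r : SimplexCategory.mk n ⟶ SimplexCategory.mk p) (hr : φ ≫ r = 𝟙 _) :
    ψ ≫ r = 𝟙 _ := by
  apply eq_id_of_map_eq X hy (ψ ≫ r) y
  rw [my_map_comp_apply, ← h, ← my_map_comp_apply, hr, my_map_id_apply]

lemma la_zero (X : CosimplicialObject (Type)) {n : ℕ} (y : X.obj (SimplexCategory.mk (n + 1)))
    (hy : NotCoface X y)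
    (h : X.map (SimplexCategory.δ (0 : Fin (n + 3))) y
       = X.map (SimplexCategory.δ (1 : Fin (n + 3))) y) : False := by
  have hret : SimplexCategory.δ (1 : Fin (n + 3)) ≫ SimplexCategory.σ (1 : Fin (n + 2)) =
      𝟙 (SimplexCategory.mk (n + 1)) :=
    SimplexCategory.δ_comp_σ_self' (Fin.castSucc_one).symm
  have h2 : X.map (SimplexCategory.δ (0 : Fin (n + 3)) ≫ SimplexCategory.σ (1 : Fin (n + 2))) y
      = y := by
    rw [my_map_comp_apply, h, ← my_map_comp_apply, hret, my_map_id_apply]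
  have h3 : SimplexCategory.δ (0 : Fin (n + 3)) ≫ SimplexCategory.σ (1 : Fin (n + 2)) =
      SimplexCategory.σ (0 : Fin (n + 1)) ≫ SimplexCategory.δ (0 : Fin (n + 2)) := by
    have := SimplexCategory.δ_comp_σ_of_le (n := n) (i := 0) (j := 0) (by simp)
    simpa using this
  refine hy n (Nat.lt_succ_self n) (SimplexCategory.δ (0 : Fin (n + 2)))
    (SimplexCategory.mono_iff_injective.mp inferInstance)
    (X.map (SimplexCategory.σ (0 : Fin (n + 1))) y) ?_
  rw [← my_map_comp_apply, ← h3, h2]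

lemma la_last (X : CosimplicialObject (Type)) {n : ℕ} (y : X.obj (SimplexCategory.mk (n + 1)))
    (hy : NotCoface X y)
    (h : X.map (SimplexCategory.δ (Fin.last (n + 2))) y
       = X.map (SimplexCategory.δ (⟨n + 1, by omega⟩ : Fin (n + 3))) y) : False := by
  have hret : SimplexCategory.δ (⟨n + 1, by omega⟩ : Fin (n + 3)) ≫
      SimplexCategory.σ (⟨n, by omega⟩ : Fin (n + 2)) = 𝟙 (SimplexCategory.mk (n + 1)) :=
    SimplexCategory.δ_comp_σ_succ' (by ext; simp)
  have h2 : X.map (SimplexCategory.δ (Fin.last (n + 2)) ≫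
      SimplexCategory.σ (⟨n, by omega⟩ : Fin (n + 2))) y = y := by
    rw [my_map_comp_apply, h, ← my_map_comp_apply, hret, my_map_id_apply]
  have h3 : SimplexCategory.δ (Fin.last (n + 2)) ≫ SimplexCategory.σ (⟨n, by omega⟩ : Fin (n + 2)) =
      SimplexCategory.σ (Fin.last n) ≫ SimplexCategory.δ (Fin.last (n + 1)) := by
    have := SimplexCategory.δ_comp_σ_of_gt (n := n) (i := Fin.last (n + 1)) (j := Fin.last n)
      (Fin.castSucc_lt_last _)
    rw [Fin.succ_last] at this
    have e : ((Fin.last n).castSucc : Fin (n + 2)) = ⟨n, by omega⟩ := by ext; simp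
    rw [e] at this
    exact this
  refine hy n (Nat.lt_succ_self n) (SimplexCategory.δ (Fin.last (n + 1)))
    (SimplexCategory.mono_iff_injective.mp inferInstance)
    (X.map (SimplexCategory.σ (Fin.last n)) y) ?_
  rw [← my_map_comp_apply, ← h3, h2]

lemma hit_lemma (X : CosimplicialObject (Type)) {p q : ℕ}
    (D₁ D₂ : SimplexCategory.mk p ⟶ SimplexCategory.mk q)
    (h₁ : Function.Injective D₁.toOrderHom)
    (y : X.obj (SimplexCategory.mk p)) (hy : NotCoface X y)
    (hxy : X.map D₁ y = X.map D₂ y)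
    (b : Fin (q + 1)) (hbA : ∀ j, D₁.toOrderHom j ≠ b)
    (i₀ : Fin (p + 1)) (hbB : D₂.toOrderHom i₀ = b) :
    p = 0 ∧ X.map (SimplexCategory.δ (0 : Fin (p + 2))) y
      = X.map (SimplexCategory.δ (1 : Fin (p + 2))) y := by
  classical
  set A : Finset (Fin (q + 1)) := Finset.image (⇑D₁.toOrderHom) Finset.univ with hAdef
  set C : Finset (Fin (q + 1)) := insert b A with hCdef
  have hbA' : b ∉ A := by
    rw [hAdef]
    simp only [Finset.mem_image, Finset.mem_univ, true_and, not_exists]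
    exact fun j h => hbA j h
  have hC : C.card = p + 2 := by
    rw [hCdef, Finset.card_insert_of_notMem hbA', hAdef,
      Finset.card_image_of_injective _ h₁, Finset.card_univ, Fintype.card_fin]
  set E := C.orderEmbOfFin hC with hEdef
  have hErange : ∀ c ∈ C, ∃ z, E z = c := by
    intro c hc
    have hr := Finset.range_orderEmbOfFin C hC
    have : c ∈ Set.range ⇑E := by rw [hEdef, hr]; exact hc
    exact this
  set Ehom : SimplexCategory.mk (p + 1) ⟶ SimplexCategory.mk q :=
    SimplexCategory.mkHom ⟨⇑E, E.monotone⟩ with hEhomdef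
  have hEinj : Function.Injective Ehom.toOrderHom := E.injective
  obtain ⟨H, hH⟩ := exists_retraction Ehom hEinj
  have hHE : ∀ z : Fin (p + 2), H.toOrderHom (E z) = z := by
    intro z
    have h2 : (Ehom ≫ H).toOrderHom z = (𝟙 (SimplexCategory.mk (p + 1))).toOrderHom z := by
      rw [hH]
    exact h2
  obtain ⟨m, hm⟩ := hErange b (Finset.mem_insert_self _ _)
  have hg₁E : ∀ j, E ((D₁ ≫ H).toOrderHom j) = D₁.toOrderHom j := by
    intro j
    obtain ⟨z, hz⟩ := hErange (D₁.toOrderHom j)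
      (Finset.mem_insert_of_mem (Finset.mem_image_of_mem _ (Finset.mem_univ j)))
    have hc : (D₁ ≫ H).toOrderHom j = H.toOrderHom (D₁.toOrderHom j) := rfl
    rw [hc, ← hz, hHE, hz]
  have hg₁inj : Function.Injective (D₁ ≫ H).toOrderHom := by
    intro a a' h
    exact h₁ (by rw [← hg₁E a, ← hg₁E a', h])
  have hg₁m : ∀ j, (D₁ ≫ H).toOrderHom j ≠ m := by
    intro j hj
    apply hbA j
    have h2 := hg₁E j
    rw [hj, hm] at h2
    exact h2.symm
  haveI : Mono (D₁ ≫ H) := SimplexCategory.mono_iff_injective.mpr hg₁inj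
  obtain ⟨i, hi⟩ := SimplexCategory.eq_δ_of_mono (D₁ ≫ H)
  have him : i = m := by
    by_contra hne
    have hmem : m ∈ Set.range (Fin.succAbove i) := by
      rw [Fin.range_succAbove]
      exact fun hmm => hne (by simpa using hmm.symm)
    obtain ⟨j, hj⟩ := hmem
    exact hg₁m j (by rw [hi]; exact hj)
  rw [him] at hi
  have hg₂i₀ : (D₂ ≫ H).toOrderHom i₀ = m := by
    have hc : (D₂ ≫ H).toOrderHom i₀ = H.toOrderHom (D₂.toOrderHom i₀) := rfl
    rw [hc, hbB, ← hm, hHE]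
  have hmain : X.map (SimplexCategory.δ m) y = X.map (D₂ ≫ H) y := by
    rw [← hi, my_map_comp_apply, my_map_comp_apply, hxy]
  have key : ∀ jr : Fin (p + 1), (SimplexCategory.δ m ≫ SimplexCategory.σ jr = 𝟙 _) →
      ∀ j, jr.predAbove ((D₂ ≫ H).toOrderHom j) = j := by
    intro jr hjr j
    have hcomp : (D₂ ≫ H) ≫ SimplexCategory.σ jr = 𝟙 _ :=
      retraction_transfer X (SimplexCategory.δ m) (D₂ ≫ H) y hy hmain
        (SimplexCategory.σ jr) hjr
    have h2 : ((D₂ ≫ H) ≫ SimplexCategory.σ jr).toOrderHom j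
        = SimplexCategory.Hom.toOrderHom (𝟙 (SimplexCategory.mk p)) j := by rw [hcomp]
    exact h2
  by_cases hm0 : (m : ℕ) = 0
  · -- m = 0 : conclude δ⁰y = δ¹y, and p must be 0
    have hjr : SimplexCategory.δ m ≫ SimplexCategory.σ (0 : Fin (p + 1)) = 𝟙 _ :=
      SimplexCategory.δ_comp_σ_self' (by ext; simp [hm0])
    have hpt := key 0 hjr
    have hvi₀ : ((D₂ ≫ H).toOrderHom i₀ : ℕ) = 0 := by
      rw [hg₂i₀]; exact hm0
    have hi₀ : (i₀ : ℕ) = 0 := by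
      have hj := congrArg Fin.val (hpt i₀)
      rw [predAbove_val, hvi₀] at hj
      simpa using hj.symm
    have hg₂ : D₂ ≫ H = SimplexCategory.δ (1 : Fin (p + 2)) := by
      apply SimplexCategory.Hom.ext
      ext j
      have hj := congrArg Fin.val (hpt j)
      rw [predAbove_val] at hj
      simp only [Fin.val_zero] at hj
      have hδ := succAbove_val (1 : Fin (p + 2)) j
      have hδ1 : ((1 : Fin (p + 2)) : ℕ) = 1 := rfl
      rw [hδ1] at hδ
      have hall : (j : ℕ) = 0 → ((D₂ ≫ H).toOrderHom j : ℕ) = 0 := by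
        intro hjz
        have hji : j = i₀ := Fin.ext (by omega)
        rw [hji]
        exact hvi₀
      show ((D₂ ≫ H).toOrderHom j : ℕ) = ((SimplexCategory.δ (1 : Fin (p + 2))).toOrderHom j : ℕ)
      rw [show ((SimplexCategory.δ (1 : Fin (p + 2))).toOrderHom j : ℕ)
        = ((1 : Fin (p + 2)).succAbove j : ℕ) from rfl, hδ]
      by_cases hjz : (j : ℕ) = 0
      · have h0 := hall hjz
        split_ifs at hj ⊢ <;> omega
      · have hj2 : (if ((D₂ ≫ H).toOrderHom j : ℕ) ≤ 0 then ((D₂ ≫ H).toOrderHom j : ℕ)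
            else ((D₂ ≫ H).toOrderHom j : ℕ) - 1) = (j : ℕ) := hj
        split_ifs at hj2 ⊢ <;> omega
    rw [hg₂] at hmain
    have hmz : m = (0 : Fin (p + 2)) := Fin.ext (by simpa using hm0)
    rw [hmz] at hmain
    cases p with
    | zero => exact ⟨rfl, hmain⟩
    | succ n => exact (la_zero X y hy hmain).elim
  · by_cases hml : (m : ℕ) = p + 1
    · -- m = last
      have hjr : SimplexCategory.δ m ≫ SimplexCategory.σ (Fin.last p) = 𝟙 _ :=
        SimplexCategory.δ_comp_σ_succ' (by ext; simp [hml])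
      have hpt := key (Fin.last p) hjr
      have hvi₀ : ((D₂ ≫ H).toOrderHom i₀ : ℕ) = p + 1 := by
        rw [hg₂i₀]; exact hml
      have hlastv : ((Fin.last p) : ℕ) = p := rfl
      have hi₀ : (i₀ : ℕ) = p := by
        have hj := congrArg Fin.val (hpt i₀)
        rw [predAbove_val, hlastv] at hj
        simp only [hvi₀] at hj
        split_ifs at hj <;> omega
      have hg₂ : D₂ ≫ H = SimplexCategory.δ (⟨p, by omega⟩ : Fin (p + 2)) := by
        apply SimplexCategory.Hom.ext
        ext j
        have hj := congrArg Fin.val (hpt j)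
        rw [predAbove_val, hlastv] at hj
        have hδ := succAbove_val (⟨p, by omega⟩ : Fin (p + 2)) j
        simp only [Fin.val_mk] at hδ
        have hall : (j : ℕ) = p → ((D₂ ≫ H).toOrderHom j : ℕ) = p + 1 := by
          intro hjp
          have hji : j = i₀ := Fin.ext (by omega)
          rw [hji]
          exact hvi₀
        have hble : ((D₂ ≫ H).toOrderHom j : ℕ) < p + 2 := ((D₂ ≫ H).toOrderHom j).isLt
        have hjlt : (j : ℕ) < p + 1 := j.isLt
        show ((D₂ ≫ H).toOrderHom j : ℕ)
          = ((SimplexCategory.δ (⟨p, by omega⟩ : Fin (p + 2))).toOrderHom j : ℕ)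
        rw [show ((SimplexCategory.δ (⟨p, by omega⟩ : Fin (p + 2))).toOrderHom j : ℕ)
          = ((⟨p, by omega⟩ : Fin (p + 2)).succAbove j : ℕ) from rfl, hδ]
        by_cases hjp : (j : ℕ) = p
        · have h0 := hall hjp
          split_ifs at hj ⊢ <;> omega
        · split_ifs at hj ⊢ <;> omega
      rw [hg₂] at hmain
      have hmz : m = Fin.last (p + 1) := Fin.ext (by simpa using hml)
      rw [hmz] at hmain
      cases p with
      | zero =>
        refine ⟨rfl, ?_⟩
        rw [show (Fin.last 1 : Fin 2) = 1 from rfl] at hmain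
        rw [show (⟨0, by omega⟩ : Fin 2) = 0 from rfl] at hmain
        exact hmain.symm
      | succ n => exact (la_last X y hy hmain).elim
    · -- interior : contradiction
      exfalso
      have h1le : 1 ≤ (m : ℕ) := by omega
      have h2lt : (m : ℕ) < p + 1 := by have := m.isLt; omega
      have hjrc : SimplexCategory.δ m ≫ SimplexCategory.σ (⟨(m : ℕ), by omega⟩ : Fin (p + 1))
          = 𝟙 _ := SimplexCategory.δ_comp_σ_self' (by ext; simp)
      have hjrs : SimplexCategory.δ m ≫
          SimplexCategory.σ (⟨(m : ℕ) - 1, by omega⟩ : Fin (p + 1)) = 𝟙 _ :=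
        SimplexCategory.δ_comp_σ_succ' (by ext; simp; omega)
      have hc := congrArg Fin.val (key _ hjrc i₀)
      have hs := congrArg Fin.val (key _ hjrs i₀)
      rw [predAbove_val] at hc hs
      have hvi₀ : ((D₂ ≫ H).toOrderHom i₀ : ℕ) = (m : ℕ) := congrArg Fin.val hg₂i₀
      simp only [hvi₀, Fin.val_mk] at hc hs
      split_ifs at hc hs <;> omega

-- injective monotone maps with the same "hit set" agree
lemma eq_of_same_range {p q : ℕ} (D₁ D₂ : SimplexCategory.mk p ⟶ SimplexCategory.mk q)
    (h₁ : Function.Injective D₁.toOrderHom) (h₂ : Function.Injective D₂.toOrderHom)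
    (h : Set.range D₁.toOrderHom = Set.range D₂.toOrderHom) : D₁ = D₂ := by
  have hsm₁ : StrictMono (fun i : Fin (p + 1) => D₁.toOrderHom i) :=
    fun a b hab => (D₁.toOrderHom.monotone.strictMono_of_injective h₁) hab
  have hsm₂ : StrictMono (fun i : Fin (p + 1) => D₂.toOrderHom i) :=
    fun a b hab => (D₂.toOrderHom.monotone.strictMono_of_injective h₂) hab
  have hr : Set.range (fun i : Fin (p + 1) => D₁.toOrderHom i)
      = Set.range (fun i : Fin (p + 1) => D₂.toOrderHom i) := h
  haveI : WellFoundedLT (Fin (p + 1)) := inferInstance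
  have hfun := (hsm₁.range_inj hsm₂).mp hr
  apply SimplexCategory.Hom.ext
  ext j
  exact congrArg Fin.val (congrFun hfun j)

lemma eq_or_exceptional (X : CosimplicialObject (Type)) {p q : ℕ}
    (D₁ D₂ : SimplexCategory.mk p ⟶ SimplexCategory.mk q)
    (h₁ : Function.Injective D₁.toOrderHom) (h₂ : Function.Injective D₂.toOrderHom)
    (y : X.obj (SimplexCategory.mk p)) (hy : NotCoface X y)
    (hxy : X.map D₁ y = X.map D₂ y) :
    D₁ = D₂ ∨ (p = 0 ∧ X.map (SimplexCategory.δ (0 : Fin (p + 2))) y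
      = X.map (SimplexCategory.δ (1 : Fin (p + 2))) y) := by
  by_cases h21 : ∀ j, ∃ i, D₁.toOrderHom i = D₂.toOrderHom j
  · by_cases h12 : ∀ j, ∃ i, D₂.toOrderHom i = D₁.toOrderHom j
    · left
      apply eq_of_same_range D₁ D₂ h₁ h₂
      apply Set.eq_of_subset_of_subset
      · rintro c ⟨j, rfl⟩
        obtain ⟨i, hi⟩ := h12 j
        exact ⟨i, hi⟩
      · rintro c ⟨j, rfl⟩
        obtain ⟨i, hi⟩ := h21 j
        exact ⟨i, hi⟩
    · right
      push_neg at h12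
      obtain ⟨j, hj⟩ := h12
      exact hit_lemma X D₂ D₁ h₂ y hy hxy.symm (D₁.toOrderHom j) (fun i hi => hj i hi) j rfl
  · right
    push_neg at h21
    obtain ⟨j, hj⟩ := h21
    exact hit_lemma X D₁ D₂ h₁ y hy hxy (D₂.toOrderHom j) (fun i hi => hj i hi) j rfl

lemma exists_decomp (X : CosimplicialObject (Type)) (q : ℕ) (x : X.obj (SimplexCategory.mk q)) :
    ∃ (p : ℕ) (_ : p ≤ q) (D : SimplexCategory.mk p ⟶ SimplexCategory.mk q)
      (y : X.obj (SimplexCategory.mk p)),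
      Function.Injective D.toOrderHom ∧ NotCoface X y ∧ X.map D y = x := by
  induction q using Nat.strong_induction_on with
  | _ q ih =>
    by_cases h : NotCoface X x
    · refine ⟨q, le_rfl, 𝟙 _, x, ?_, h, FunctorToTypes.map_id_apply X x⟩
      intro a a' haa
      exact haa
    · unfold NotCoface at h
      push_neg at h
      obtain ⟨p', hp', f, hf, z, hz⟩ := h
      obtain ⟨p, hpq, D, y, hD, hy, hxy⟩ := ih p' hp' z
      refine ⟨p, le_of_lt (lt_of_le_of_lt hpq hp'), D ≫ f, y, ?_, hy, ?_⟩
      · intro a a' haa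
        exact hD (hf haa)
      · rw [my_map_comp_apply, hxy, hz]

lemma const_eq (X : CosimplicialObject (Type)) (q : ℕ) (y : X.obj (SimplexCategory.mk 0))
    (h : X.map (SimplexCategory.δ (0 : Fin 2)) y = X.map (SimplexCategory.δ (1 : Fin 2)) y)
    (D D' : SimplexCategory.mk 0 ⟶ SimplexCategory.mk q) :
    X.map D y = X.map D' y := by
  have hconst : ∀ (D : SimplexCategory.mk 0 ⟶ SimplexCategory.mk q) (k : Fin (q + 1)),
      D.toOrderHom 0 = k → D = SimplexCategory.mkHom ⟨fun _ => k, monotone_const⟩ := by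
    intro D k hk
    apply SimplexCategory.Hom.ext
    ext j
    have hj : j = 0 := Subsingleton.elim (α := Fin 1) j 0
    rw [hj]
    exact congrArg Fin.val hk
  have main : ∀ k : Fin (q + 1),
      X.map (SimplexCategory.mkHom (n := 0) (m := q) ⟨fun _ => k, monotone_const⟩) y
        = X.map (SimplexCategory.mkHom ⟨fun _ => (0 : Fin (q + 1)), monotone_const⟩) y := by
    intro k
    induction k using Fin.induction with
    | zero => rfl
    | succ i ihi =>
      rw [← ihi]
      have hv : Monotone (fun j : Fin 2 => (⟨(i : ℕ) + (j : ℕ), by omega⟩ : Fin (q + 1))) := by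
        intro a b hab
        simp only [Fin.mk_le_mk]
        have : (a : ℕ) ≤ (b : ℕ) := hab
        omega
      set v : SimplexCategory.mk 1 ⟶ SimplexCategory.mk q :=
        SimplexCategory.mkHom ⟨fun j => ⟨(i : ℕ) + (j : ℕ), by omega⟩, hv⟩ with hvdef
      have e1 : SimplexCategory.δ (1 : Fin 2) ≫ v
          = SimplexCategory.mkHom (n := 0) ⟨fun _ => i.castSucc, monotone_const⟩ := by
        apply SimplexCategory.Hom.ext
        ext j
        have hj : j = 0 := Subsingleton.elim (α := Fin 1) j 0
        rw [hj]
        rfl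
      have e0 : SimplexCategory.δ (0 : Fin 2) ≫ v
          = SimplexCategory.mkHom (n := 0) ⟨fun _ => i.succ, monotone_const⟩ := by
        apply SimplexCategory.Hom.ext
        ext j
        have hj : j = 0 := Subsingleton.elim (α := Fin 1) j 0
        rw [hj]
        rfl
      calc X.map (SimplexCategory.mkHom (n := 0) (m := q) ⟨fun _ => i.succ, monotone_const⟩) y
          = X.map (SimplexCategory.δ (0 : Fin 2) ≫ v) y := by rw [e0]
        _ = X.map v (X.map (SimplexCategory.δ (0 : Fin 2)) y) := my_map_comp_apply X _ _ y
        _ = X.map v (X.map (SimplexCategory.δ (1 : Fin 2)) y) := by rw [h]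
        _ = X.map (SimplexCategory.δ (1 : Fin 2) ≫ v) y := (my_map_comp_apply X _ _ y).symm
        _ = X.map (SimplexCategory.mkHom (n := 0) (m := q)
              ⟨fun _ => i.castSucc, monotone_const⟩) y := by rw [e1]
  have hD := hconst D (D.toOrderHom 0) rfl
  have hD' := hconst D' (D'.toOrderHom 0) rfl
  rw [hD, hD', main (D.toOrderHom 0), main (D'.toOrderHom 0)]

end AuxLemmas

theorem cosimplicial_unique_decomposition (X : CosimplicialObject (Type)) (q : ℕ)
    (x : X.obj (SimplexCategory.mk q)) :
    -- existence of a decomposition `x = D(y)`, `y` not a coface, `p ≤ q`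
    (∃ (p : ℕ) (_ : p ≤ q) (D : SimplexCategory.mk p ⟶ SimplexCategory.mk q)
        (y : X.obj (SimplexCategory.mk p)),
        Function.Injective D.toOrderHom ∧ NotCoface X y ∧ X.map D y = x) ∧
    -- uniqueness of `y` (hence of `p`), and uniqueness of the injection `D` unless
    -- `p = 0` and `d^0 y = d^1 y`
    (∀ (p₁ p₂ : ℕ)
        (D₁ : SimplexCategory.mk p₁ ⟶ SimplexCategory.mk q)
        (D₂ : SimplexCategory.mk p₂ ⟶ SimplexCategory.mk q)
        (y₁ : X.obj (SimplexCategory.mk p₁)) (y₂ : X.obj (SimplexCategory.mk p₂)),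
        Function.Injective D₁.toOrderHom → Function.Injective D₂.toOrderHom →
        NotCoface X y₁ → NotCoface X y₂ → X.map D₁ y₁ = x → X.map D₂ y₂ = x →
        p₁ = p₂ ∧ HEq y₁ y₂ ∧
          (¬ (p₁ = 0 ∧ X.δ 0 y₁ = X.δ 1 y₁) → HEq D₁ D₂)) ∧
    -- in the exceptional case all injections from `[0]` act equally
    (∀ (y : X.obj (SimplexCategory.mk 0)), X.δ 0 y = X.δ 1 y →
        ∀ (D D' : SimplexCategory.mk 0 ⟶ SimplexCategory.mk q),
          Function.Injective D.toOrderHom → Function.Injective D'.toOrderHom →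
          X.map D y = X.map D' y) := by
  refine ⟨exists_decomp X q x, ?_, ?_⟩
  · intro p₁ p₂ D₁ D₂ y₁ y₂ h₁ h₂ hy₁ hy₂ hx₁ hx₂
    obtain ⟨r₁, hr₁⟩ := exists_retraction D₁ h₁
    obtain ⟨r₂, hr₂⟩ := exists_retraction D₂ h₂
    have h21 : X.map (D₂ ≫ r₁) y₂ = y₁ := by
      rw [my_map_comp_apply, hx₂, ← hx₁, ← my_map_comp_apply, hr₁, my_map_id_apply]
    have h12 : X.map (D₁ ≫ r₂) y₁ = y₂ := by
      rw [my_map_comp_apply, hx₁, ← hx₂, ← my_map_comp_apply, hr₂, my_map_id_apply]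
    have s21 := surjective_of_map_eq X hy₁ _ _ h21
    have s12 := surjective_of_map_eq X hy₂ _ _ h12
    have hp : p₁ = p₂ := by
      have a1 : Fintype.card (Fin (p₁ + 1)) ≤ Fintype.card (Fin (p₂ + 1)) :=
        Fintype.card_le_of_surjective _ s21
      have a2 : Fintype.card (Fin (p₂ + 1)) ≤ Fintype.card (Fin (p₁ + 1)) :=
        Fintype.card_le_of_surjective _ s12
      simp only [Fintype.card_fin] at a1 a2
      omega
    subst hp
    have hid : D₂ ≫ r₁ = 𝟙 _ := eq_id_of_map_eq X hy₁ _ _ h21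
    have hyy : y₂ = y₁ := by rw [← h21, hid, my_map_id_apply]
    subst hyy
    refine ⟨rfl, HEq.rfl, ?_⟩
    intro hexc
    rcases eq_or_exceptional X D₁ D₂ h₁ h₂ y₂ hy₁ (hx₁.trans hx₂.symm) with he | he
    · exact heq_of_eq he
    · exact absurd he hexc
  · intro y hδ D D' _ _
    exact const_eq X q y hδ D D'
end

section
/- As a semi-cosimplicial set, any cosimplicial set X splits as a disjoint union of constant sub-cosimplicial sets, one for each y ∈ X^0 with d^0 y = d^1 y, and free semi-cosimplicial sets Inj(r) generated by the non-coface elements y with d^0 y ≠ d^1 y (when y ∈ X^0) or y of positive degree. -/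
/-!
STATEMENT 3: As a semi-cosimplicial set, any cosimplicial set `X` splits as a disjoint
union of constant sub-cosimplicial sets, one for each `y ∈ X^0` with `d^0 y = d^1 y`, and
of free semi-cosimplicial sets `Inj(p)` (represented by `[p]`, i.e.
`Inj(p)^q = Δ^inj([p],[q])`, monotone injections), one for each non-coface element `y`
of degree `p` which is not of the previous kind.  The splitting is compatible with all
coface maps (i.e. it is an isomorphism of semi-cosimplicial sets), sends each constant
generator to itself, and each free generator to the identity injection of its own piece.
-/

open CategoryTheory

/-- The free semi-cosimplicial set represented by `[p]`, in degree `q`: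
monotone injections `[p] → [q]`, i.e. order embeddings. -/
abbrev InjEmb (p q : ℕ) : Type := Fin (p + 1) ↪o Fin (q + 1)

open SimplexCategory

local notation "⦋" n "⦌" => SimplexCategory.mk n

namespace CosimSplit

variable {p q : ℕ}

/-- the "floor" monotone retraction candidate of a map `f`. -/
def floorFun (f : Fin (p+1) →o Fin (q+1)) (t : Fin (q+1)) : Fin (p+1) :=
  if h : (Finset.univ.filter (fun j => f j ≤ t)).Nonempty then
    (Finset.univ.filter (fun j => f j ≤ t)).max' h else 0

lemma floorFun_mono (f : Fin (p+1) →o Fin (q+1)) : Monotone (floorFun f) := by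
  intro t t' htt'
  unfold floorFun
  by_cases h : (Finset.univ.filter (fun j => f j ≤ t)).Nonempty
  · have hsub : (Finset.univ.filter (fun j => f j ≤ t)) ⊆
        (Finset.univ.filter (fun j => f j ≤ t')) := by
      intro j hj
      simp only [Finset.mem_filter, Finset.mem_univ, true_and] at hj ⊢
      exact hj.trans htt'
    rw [dif_pos h, dif_pos (h.mono hsub)]
    exact Finset.max'_subset h hsub
  · rw [dif_neg h]
    exact Fin.zero_le _

lemma floorFun_retr (f : Fin (p+1) →o Fin (q+1)) (hf : StrictMono f) (i : Fin (p+1)) :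
    floorFun f (f i) = i := by
  have hmem : i ∈ Finset.univ.filter (fun j => f j ≤ f i) := by simp
  have hne : (Finset.univ.filter (fun j => f j ≤ f i)).Nonempty := ⟨i, hmem⟩
  rw [floorFun, dif_pos hne]
  refine le_antisymm (Finset.max'_le _ _ _ fun j hj => ?_) (Finset.le_max' _ _ hmem)
  simp only [Finset.mem_filter, Finset.mem_univ, true_and] at hj
  exact hf.le_iff_le.mp hj

/-- the "ceil" monotone retraction candidate. -/
def ceilFun (f : Fin (p+1) →o Fin (q+1)) (t : Fin (q+1)) : Fin (p+1) :=
  if h : (Finset.univ.filter (fun j => t ≤ f j)).Nonempty then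
    (Finset.univ.filter (fun j => t ≤ f j)).min' h else Fin.last p

lemma ceilFun_mono (f : Fin (p+1) →o Fin (q+1)) : Monotone (ceilFun f) := by
  intro t t' htt'
  unfold ceilFun
  by_cases h : (Finset.univ.filter (fun j => t' ≤ f j)).Nonempty
  · have hsub : (Finset.univ.filter (fun j => t' ≤ f j)) ⊆
        (Finset.univ.filter (fun j => t ≤ f j)) := by
      intro j hj
      simp only [Finset.mem_filter, Finset.mem_univ, true_and] at hj ⊢
      exact htt'.trans hj
    rw [dif_pos h, dif_pos (h.mono hsub)]
    exact Finset.min'_subset h hsub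
  · rw [dif_neg h]
    exact Fin.le_last _

lemma ceilFun_retr (f : Fin (p+1) →o Fin (q+1)) (hf : StrictMono f) (i : Fin (p+1)) :
    ceilFun f (f i) = i := by
  have hmem : i ∈ Finset.univ.filter (fun j => f i ≤ f j) := by simp
  have hne : (Finset.univ.filter (fun j => f i ≤ f j)).Nonempty := ⟨i, hmem⟩
  rw [ceilFun, dif_pos hne]
  refine le_antisymm (Finset.min'_le _ _ hmem) (Finset.le_min' _ _ _ fun j hj => ?_)
  simp only [Finset.mem_filter, Finset.mem_univ, true_and] at hj
  exact hf.le_iff_le.mp hj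

/-- strict monotonicity of an injective hom -/
lemma hom_strictMono {f : (⦋p⦌ : SimplexCategory) ⟶ ⦋q⦌}
    (hf : Function.Injective f.toOrderHom) : StrictMono f.toOrderHom :=
  f.toOrderHom.monotone.strictMono_of_injective hf

/-- the floor retraction, as a hom. -/
def retrHom (f : (⦋p⦌ : SimplexCategory) ⟶ ⦋q⦌) (_hf : Function.Injective f.toOrderHom) :
    (⦋q⦌ : SimplexCategory) ⟶ ⦋p⦌ :=
  mkHom ⟨floorFun f.toOrderHom, floorFun_mono _⟩

lemma retrHom_comp (f : (⦋p⦌ : SimplexCategory) ⟶ ⦋q⦌) (hf : Function.Injective f.toOrderHom) :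
    f ≫ retrHom f hf = 𝟙 _ := by
  apply Hom.ext
  ext j
  exact congrArg Fin.val (floorFun_retr f.toOrderHom (hom_strictMono hf) j)

/-- the ceil retraction, as a hom. -/
def ceilRetrHom (f : (⦋p⦌ : SimplexCategory) ⟶ ⦋q⦌) (_hf : Function.Injective f.toOrderHom) :
    (⦋q⦌ : SimplexCategory) ⟶ ⦋p⦌ :=
  mkHom ⟨ceilFun f.toOrderHom, ceilFun_mono _⟩

lemma ceilRetrHom_comp (f : (⦋p⦌ : SimplexCategory) ⟶ ⦋q⦌)
    (hf : Function.Injective f.toOrderHom) : f ≫ ceilRetrHom f hf = 𝟙 _ := by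
  apply Hom.ext
  ext j
  exact congrArg Fin.val (ceilFun_retr f.toOrderHom (hom_strictMono hf) j)

end CosimSplit

namespace CosimSplit

variable {p q : ℕ}

lemma exists_factor {a b : SimplexCategory} (h : a ⟶ b) :
    ∃ (k : ℕ) (e : a ⟶ ⦋k⦌) (m : (⦋k⦌ : SimplexCategory) ⟶ b),
      Epi e ∧ Mono m ∧ e ≫ m = h := by
  refine ⟨(Limits.image h).len, Limits.factorThruImage h ≫ eqToHom (mk_len _).symm,
    eqToHom (mk_len _) ≫ Limits.image.ι h, epi_comp _ _, mono_comp _ _, by simp⟩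

lemma epi_of_notCoface (X : CosimplicialObject (Type)) {p p' : ℕ}
    (h : (⦋p⦌ : SimplexCategory) ⟶ ⦋p'⦌) (y : X.obj ⦋p⦌)
    (hz : NotCoface X (X.map h y)) : Epi h := by
  obtain ⟨k, e, m, he, hm, hfac⟩ := exists_factor h
  have hk : k ≤ p' := by simpa using @len_le_of_mono _ _ m hm
  rcases lt_or_eq_of_le hk with hlt | rfl
  · exact absurd (by rw [← FunctorToTypes.map_comp_apply (F := X), hfac])
      (hz k hlt m (mono_iff_injective.mp hm) (X.map e y))
  · haveI := hm
    rw [← hfac, eq_id_of_mono m, Category.comp_id]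
    exact he

lemma map_injective (X : CosimplicialObject (Type)) (f : (⦋p⦌ : SimplexCategory) ⟶ ⦋q⦌)
    (hf : Function.Injective f.toOrderHom) : Function.Injective (X.map f) := by
  intro u v huv
  have := congrArg (X.map (retrHom f hf)) huv
  rwa [← FunctorToTypes.map_comp_apply (F := X), ← FunctorToTypes.map_comp_apply (F := X),
    retrHom_comp f hf, FunctorToTypes.map_id_apply (F := X), FunctorToTypes.map_id_apply (F := X)] at this

lemma gen_unique (X : CosimplicialObject (Type)) {q p p' : ℕ}
    (f : (⦋p⦌ : SimplexCategory) ⟶ ⦋q⦌) (g : (⦋p'⦌ : SimplexCategory) ⟶ ⦋q⦌)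
    (hf : Function.Injective f.toOrderHom) (hg : Function.Injective g.toOrderHom)
    (y : X.obj ⦋p⦌) (z : X.obj ⦋p'⦌) (hy : NotCoface X y) (hz : NotCoface X z)
    (hxy : X.map f y = X.map g z) :
    (⟨p, y⟩ : Σ n : ℕ, X.obj ⦋n⦌) = ⟨p', z⟩ := by
  have hzy : X.map (f ≫ retrHom g hg) y = z := by
    rw [FunctorToTypes.map_comp_apply (F := X), hxy, ← FunctorToTypes.map_comp_apply (F := X),
      retrHom_comp g hg, FunctorToTypes.map_id_apply (F := X)]
  have hyz : X.map (g ≫ retrHom f hf) z = y := by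
    rw [FunctorToTypes.map_comp_apply (F := X), ← hxy, ← FunctorToTypes.map_comp_apply (F := X),
      retrHom_comp f hf, FunctorToTypes.map_id_apply (F := X)]
  have e1 : Epi (f ≫ retrHom g hg) := epi_of_notCoface X _ y (by rw [hzy]; exact hz)
  have e2 : Epi (g ≫ retrHom f hf) := epi_of_notCoface X _ z (by rw [hyz]; exact hy)
  have hle1 : p' ≤ p := by simpa using @len_le_of_epi _ _ _ e1
  have hle2 : p ≤ p' := by simpa using @len_le_of_epi _ _ _ e2
  obtain rfl : p = p' := le_antisymm hle2 hle1
  haveI := e1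
  rw [eq_id_of_epi (f ≫ retrHom g hg)] at hzy
  rw [FunctorToTypes.map_id_apply (F := X)] at hzy
  rw [hzy]

lemma map_const_eq (X : CosimplicialObject (Type)) {q : ℕ} (y : X.obj ⦋0⦌)
    (hy : X.δ 0 y = X.δ 1 y) (f g : (⦋0⦌ : SimplexCategory) ⟶ ⦋q⦌) :
    X.map f y = X.map g y := by
  suffices H : ∀ a : Fin (q+1), X.map (const ⦋0⦌ ⦋q⦌ a) y = X.map (const ⦋0⦌ ⦋q⦌ 0) y by
    rw [eq_const_of_zero f, eq_const_of_zero g, H (f.toOrderHom 0), H (g.toOrderHom 0)]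
  intro a
  induction a using Fin.induction with
  | zero => rfl
  | succ a ih =>
    rw [← ih]
    have h1 : const ⦋0⦌ ⦋q⦌ a.castSucc =
        SimplexCategory.δ 1 ≫ mkOfLe a.castSucc a.succ (Fin.castSucc_le_succ a) := by
      apply Hom.ext_zero_left
      simp [SimplexCategory.δ, mkOfLe, Fin.succAbove]
      rfl
    have h0 : const ⦋0⦌ ⦋q⦌ a.succ =
        SimplexCategory.δ 0 ≫ mkOfLe a.castSucc a.succ (Fin.castSucc_le_succ a) := by
      apply Hom.ext_zero_left
      simp [SimplexCategory.δ, mkOfLe, Fin.succAbove]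
      rfl
    rw [h0, h1, FunctorToTypes.map_comp_apply (F := X), FunctorToTypes.map_comp_apply (F := X)]
    show X.map _ (X.δ 0 y) = X.map _ (X.δ 1 y)
    rw [hy]

lemma const_lt (X : CosimplicialObject (Type)) {q : ℕ} (y : X.obj ⦋0⦌)
    {a b : Fin (q+1)} (hab : a < b)
    (h : X.map (const ⦋0⦌ ⦋q⦌ a) y = X.map (const ⦋0⦌ ⦋q⦌ b) y) :
    X.δ 0 y = X.δ 1 y := by
  set m := mkOfLe a b hab.le with hm
  have h1 : const ⦋0⦌ ⦋q⦌ a = SimplexCategory.δ 1 ≫ m := by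
    apply Hom.ext_zero_left
    simp [hm, SimplexCategory.δ, mkOfLe, Fin.succAbove]
    rfl
  have h0 : const ⦋0⦌ ⦋q⦌ b = SimplexCategory.δ 0 ≫ m := by
    apply Hom.ext_zero_left
    simp [hm, SimplexCategory.δ, mkOfLe, Fin.succAbove]
    rfl
  have hminj : Function.Injective m.toOrderHom := by
    intro s t hst
    match s, t with
    | (0 : Fin 2), (0 : Fin 2) => rfl
    | (1 : Fin 2), (1 : Fin 2) => rfl
    | (0 : Fin 2), (1 : Fin 2) => exact absurd hst hab.ne
    | (1 : Fin 2), (0 : Fin 2) => exact absurd hst.symm hab.ne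
  rw [h1, h0, FunctorToTypes.map_comp_apply (F := X), FunctorToTypes.map_comp_apply (F := X)] at h
  have := map_injective X m hminj h
  exact this.symm

lemma zero_unique (X : CosimplicialObject (Type)) {q : ℕ} (y : X.obj ⦋0⦌)
    (hy : ¬ X.δ 0 y = X.δ 1 y) (f g : (⦋0⦌ : SimplexCategory) ⟶ ⦋q⦌)
    (hfg : X.map f y = X.map g y) : f = g := by
  rw [eq_const_of_zero f, eq_const_of_zero g]
  rw [eq_const_of_zero f, eq_const_of_zero g] at hfg
  rcases lt_trichotomy (f.toOrderHom 0) (g.toOrderHom 0) with h | h | h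
  · exact absurd (const_lt X y h hfg) hy
  · rw [h]
  · exact absurd (const_lt X y h hfg.symm) hy

end CosimSplit

namespace CosimSplit

lemma sep {p q : ℕ} (hp : 0 < p) (f g : (⦋p⦌ : SimplexCategory) ⟶ ⦋q⦌)
    (hf : Function.Injective f.toOrderHom) (hg : Function.Injective g.toOrderHom)
    (i : Fin (p + 1)) (hlt : g.toOrderHom i < f.toOrderHom i) :
    (∃ r : (⦋q⦌ : SimplexCategory) ⟶ ⦋p⦌, f ≫ r = 𝟙 _ ∧ g ≫ r ≠ 𝟙 _) ∨
    (∃ r : (⦋q⦌ : SimplexCategory) ⟶ ⦋p⦌, g ≫ r = 𝟙 _ ∧ f ≫ r ≠ 𝟙 _) := by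
  by_cases hne : (Finset.univ.filter (fun j => f.toOrderHom j ≤ g.toOrderHom i)).Nonempty
  · left
    refine ⟨retrHom f hf, retrHom_comp f hf, fun hcomp => ?_⟩
    have happ : floorFun f.toOrderHom (g.toOrderHom i) = i := by
      have := congrArg (fun h => Hom.toOrderHom h i) hcomp
      simpa [retrHom] using this
    rw [floorFun, dif_pos hne] at happ
    have hmem := Finset.max'_mem _ hne
    rw [happ] at hmem
    simp only [Finset.mem_filter, Finset.mem_univ, true_and] at hmem
    exact absurd hmem (not_le.mpr hlt)
  · have hgf : g.toOrderHom i < f.toOrderHom 0 := by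
      by_contra hge
      push_neg at hge
      exact hne ⟨0, by simpa using hge⟩
    by_cases hi : i = 0
    · subst hi
      right
      refine ⟨ceilRetrHom g hg, ceilRetrHom_comp g hg, fun hcomp => ?_⟩
      have happ : ceilFun g.toOrderHom (f.toOrderHom 0) = 0 := by
        have := congrArg (fun h => Hom.toOrderHom h 0) hcomp
        simpa [ceilRetrHom] using this
      by_cases hne2 : (Finset.univ.filter
          (fun j => f.toOrderHom 0 ≤ g.toOrderHom j)).Nonempty
      · rw [ceilFun, dif_pos hne2] at happ
        have hmem := Finset.min'_mem _ hne2
        rw [happ] at hmem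
        simp only [Finset.mem_filter, Finset.mem_univ, true_and] at hmem
        exact absurd hmem (not_le.mpr hgf)
      · rw [ceilFun, dif_neg hne2] at happ
        have := congrArg Fin.val happ
        simp [Fin.last] at this
        omega
    · left
      refine ⟨retrHom f hf, retrHom_comp f hf, fun hcomp => ?_⟩
      have happ : floorFun f.toOrderHom (g.toOrderHom i) = i := by
        have := congrArg (fun h => Hom.toOrderHom h i) hcomp
        simpa [retrHom] using this
      rw [floorFun, dif_neg hne] at happ
      exact hi happ.symm

lemma mono_unique {p q : ℕ} (hp : 0 < p) (f g : (⦋p⦌ : SimplexCategory) ⟶ ⦋q⦌)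
    (hf : Function.Injective f.toOrderHom) (hg : Function.Injective g.toOrderHom)
    (H1 : ∀ r : (⦋q⦌ : SimplexCategory) ⟶ ⦋p⦌, f ≫ r = 𝟙 _ → g ≫ r = 𝟙 _)
    (H2 : ∀ r : (⦋q⦌ : SimplexCategory) ⟶ ⦋p⦌, g ≫ r = 𝟙 _ → f ≫ r = 𝟙 _) :
    f = g := by
  by_contra hne
  have hex : ∃ i, f.toOrderHom i ≠ g.toOrderHom i := by
    by_contra hall
    push_neg at hall
    exact hne (Hom.ext _ _ (OrderHom.ext _ _ (funext hall)))
  obtain ⟨i, hi⟩ := hex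
  rcases lt_or_gt_of_ne hi with h | h
  · rcases sep hp g f hg hf i h with ⟨r, hr1, hr2⟩ | ⟨r, hr1, hr2⟩
    · exact hr2 (H2 r hr1)
    · exact hr2 (H1 r hr1)
  · rcases sep hp f g hf hg i h with ⟨r, hr1, hr2⟩ | ⟨r, hr1, hr2⟩
    · exact hr2 (H1 r hr1)
    · exact hr2 (H2 r hr1)

lemma exists_pres (X : CosimplicialObject (Type)) :
    ∀ (q : ℕ) (x : X.obj ⦋q⦌), ∃ (p : ℕ) (f : (⦋p⦌ : SimplexCategory) ⟶ ⦋q⦌)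
      (y : X.obj ⦋p⦌), Function.Injective f.toOrderHom ∧ NotCoface X y ∧ X.map f y = x := by
  intro q
  induction q using Nat.strong_induction_on with
  | _ q ih =>
    intro x
    by_cases hx : NotCoface X x
    · exact ⟨q, 𝟙 _, x, fun a b hab => by simpa using hab, hx,
        FunctorToTypes.map_id_apply _ _⟩
    · simp only [NotCoface, not_forall, not_not, exists_prop] at hx
      obtain ⟨p', hp', f, hf, z, hz⟩ := hx
      obtain ⟨p, g, y, hg, hy, hgy⟩ := ih p' hp' z
      refine ⟨p, g ≫ f, y, ?_, hy, by rw [FunctorToTypes.map_comp_apply (F := X), hgy, hz]⟩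
      intro a b hab
      exact hg (hf hab)

end CosimSplit

namespace CosimSplit

variable (X : CosimplicialObject (Type))

abbrev CP := {y : X.obj (SimplexCategory.mk 0) // X.δ 0 y = X.δ 1 y}

abbrev GP := {z : Σ p : ℕ, X.obj (SimplexCategory.mk p) //
    NotCoface X z.2 ∧ ¬ (z.1 = 0 ∧ X.δ 0 z.2 = X.δ 1 z.2)}

def emb2hom {p q : ℕ} (φ : InjEmb p q) : (⦋p⦌ : SimplexCategory) ⟶ ⦋q⦌ :=
  mkHom ⟨φ, φ.monotone⟩

lemma emb2hom_inj {p q : ℕ} (φ : InjEmb p q) :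
    Function.Injective (emb2hom φ).toOrderHom := φ.injective

def embOfHom {p q : ℕ} (f : (⦋p⦌ : SimplexCategory) ⟶ ⦋q⦌)
    (hf : Function.Injective f.toOrderHom) : InjEmb p q :=
  OrderEmbedding.ofStrictMono f.toOrderHom (hom_strictMono hf)

lemma emb2hom_embOfHom {p q : ℕ} (f : (⦋p⦌ : SimplexCategory) ⟶ ⦋q⦌)
    (hf : Function.Injective f.toOrderHom) : emb2hom (embOfHom f hf) = f := by
  apply Hom.ext
  apply OrderHom.ext
  rfl

def decode (q : ℕ) : (CP X ⊕ Σ g : GP X, InjEmb g.1.1 q) → X.obj ⦋q⦌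
  | Sum.inl c => X.map (const ⦋0⦌ ⦋q⦌ 0) c.1
  | Sum.inr ⟨g, φ⟩ => X.map (emb2hom φ) g.1.2

lemma notCoface_zero (y : X.obj ⦋0⦌) : NotCoface X y :=
  fun p' h => absurd h (Nat.not_lt_zero p')

lemma const_inj {q : ℕ} : Function.Injective (const ⦋0⦌ ⦋q⦌ 0).toOrderHom :=
  fun a b _ => Subsingleton.elim (α := Fin 1) a b

lemma decode_surj (q : ℕ) : Function.Surjective (decode X q) := by
  intro x
  obtain ⟨p, f, y, hf, hy, rfl⟩ := exists_pres X q x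
  cases p with
  | zero =>
    by_cases hc : X.δ 0 y = X.δ 1 y
    · exact ⟨Sum.inl ⟨y, hc⟩, map_const_eq X y hc _ f⟩
    · exact ⟨Sum.inr ⟨⟨⟨0, y⟩, hy, fun h => hc h.2⟩, embOfHom f hf⟩,
        by show X.map (emb2hom (embOfHom f hf)) y = X.map f y; rw [emb2hom_embOfHom]⟩
  | succ n =>
    exact ⟨Sum.inr ⟨⟨⟨n + 1, y⟩, hy, fun h => Nat.succ_ne_zero n h.1⟩, embOfHom f hf⟩,
      by show X.map (emb2hom (embOfHom f hf)) y = X.map f y; rw [emb2hom_embOfHom]⟩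

lemma decode_inj (q : ℕ) : Function.Injective (decode X q) := by
  intro s t hst
  match s, t with
  | Sum.inl c, Sum.inl c' =>
    have := map_injective X (const ⦋0⦌ ⦋q⦌ 0) const_inj hst
    exact congrArg Sum.inl (Subtype.ext this)
  | Sum.inl c, Sum.inr gφ =>
    exfalso
    obtain ⟨⟨⟨p, y⟩, hy, hny⟩, φ⟩ := gφ
    simp only [decode] at hst
    have hsig := gen_unique X (const ⦋0⦌ ⦋q⦌ 0) (emb2hom φ) const_inj (emb2hom_inj φ)
      c.1 y (notCoface_zero X c.1) hy hst
    obtain ⟨rfl, h2⟩ := Sigma.mk.inj_iff.mp hsig.symm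
    exact hny ⟨rfl, by rw [eq_of_heq h2]; exact c.2⟩
  | Sum.inr gφ, Sum.inl c =>
    exfalso
    obtain ⟨⟨⟨p, y⟩, hy, hny⟩, φ⟩ := gφ
    simp only [decode] at hst
    have hsig := gen_unique X (const ⦋0⦌ ⦋q⦌ 0) (emb2hom φ) const_inj (emb2hom_inj φ)
      c.1 y (notCoface_zero X c.1) hy hst.symm
    obtain ⟨rfl, h2⟩ := Sigma.mk.inj_iff.mp hsig.symm
    exact hny ⟨rfl, by rw [eq_of_heq h2]; exact c.2⟩
  | Sum.inr gφ, Sum.inr gφ' =>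
    obtain ⟨⟨⟨p, y⟩, hy, hny⟩, φ⟩ := gφ
    obtain ⟨⟨⟨p', y'⟩, hy', hny'⟩, φ'⟩ := gφ'
    simp only [decode] at hst
    have hsig := gen_unique X (emb2hom φ) (emb2hom φ') (emb2hom_inj φ) (emb2hom_inj φ')
      y y' hy hy' hst
    obtain ⟨rfl, h2⟩ := Sigma.mk.inj_iff.mp hsig
    obtain rfl : y = y' := eq_of_heq h2
    have hφ : emb2hom φ = emb2hom φ' := by
      cases p with
      | zero => exact zero_unique X y (fun h => hny ⟨rfl, h⟩) _ _ hst
      | succ n =>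
        refine mono_unique (Nat.succ_pos n) _ _ (emb2hom_inj φ) (emb2hom_inj φ') ?_ ?_
        · intro r hr
          have hyy : X.map (emb2hom φ' ≫ r) y = y := by
            rw [FunctorToTypes.map_comp_apply (F := X), ← hst, ← FunctorToTypes.map_comp_apply (F := X), hr,
              FunctorToTypes.map_id_apply (F := X)]
          haveI : Epi (emb2hom φ' ≫ r) := epi_of_notCoface X _ y (by rw [hyy]; exact hy)
          exact eq_id_of_epi _
        · intro r hr
          have hyy : X.map (emb2hom φ ≫ r) y = y := by
            rw [FunctorToTypes.map_comp_apply (F := X), hst, ← FunctorToTypes.map_comp_apply (F := X), hr,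
              FunctorToTypes.map_id_apply (F := X)]
          haveI : Epi (emb2hom φ ≫ r) := epi_of_notCoface X _ y (by rw [hyy]; exact hy)
          exact eq_id_of_epi _
    have hφφ : φ = φ' :=
      DFunLike.coe_injective (congrArg (fun h => ⇑(Hom.toOrderHom h)) hφ)
    cases hφφ
    rfl

lemma emb2hom_trans {p q : ℕ} (φ : InjEmb p q) (i : Fin (q + 2)) :
    emb2hom (φ.trans (Fin.succAboveOrderEmb i)) = emb2hom φ ≫ SimplexCategory.δ i := rfl

lemma emb2hom_refl (p : ℕ) :
    emb2hom ((OrderIso.refl (Fin (p + 1))).toOrderEmbedding) = 𝟙 (⦋p⦌ : SimplexCategory) := rfl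

end CosimSplit

open CosimSplit in
theorem cosimplicial_splits_as_semicosimplicial (X : CosimplicialObject (Type)) :
    ∃ e : ∀ q : ℕ,
        X.obj (SimplexCategory.mk q) ≃
          ({y : X.obj (SimplexCategory.mk 0) // X.δ 0 y = X.δ 1 y} ⊕
            (Σ g : {z : Σ p : ℕ, X.obj (SimplexCategory.mk p) //
                NotCoface X z.2 ∧ ¬ (z.1 = 0 ∧ X.δ 0 z.2 = X.δ 1 z.2)},
              InjEmb g.1.1 q)),
      -- compatibility with all coface maps: constant on the constant pieces,
      -- postcomposition with `d^i` on the free pieces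
      (∀ (q : ℕ) (i : Fin (q + 2)) (x : X.obj (SimplexCategory.mk q)),
          e (q + 1) (X.δ i x) =
            Sum.map id
              (fun s : (Σ g : {z : Σ p : ℕ, X.obj (SimplexCategory.mk p) //
                  NotCoface X z.2 ∧ ¬ (z.1 = 0 ∧ X.δ 0 z.2 = X.δ 1 z.2)},
                    InjEmb g.1.1 q) =>
                (⟨s.1, s.2.trans (Fin.succAboveOrderEmb i)⟩ :
                  Σ g : {z : Σ p : ℕ, X.obj (SimplexCategory.mk p) //
                    NotCoface X z.2 ∧ ¬ (z.1 = 0 ∧ X.δ 0 z.2 = X.δ 1 z.2)},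
                      InjEmb g.1.1 (q + 1)))
              (e q x)) ∧
      -- each constant generator indexes its own constant piece
      (∀ c : {y : X.obj (SimplexCategory.mk 0) // X.δ 0 y = X.δ 1 y},
          e 0 c.1 = Sum.inl c) ∧
      -- each free generator corresponds to the identity injection of its piece
      (∀ g : {z : Σ p : ℕ, X.obj (SimplexCategory.mk p) //
          NotCoface X z.2 ∧ ¬ (z.1 = 0 ∧ X.δ 0 z.2 = X.δ 1 z.2)},
          e g.1.1 g.1.2 =
            Sum.inr ⟨g, (OrderIso.refl (Fin (g.1.1 + 1))).toOrderEmbedding⟩) := by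
  refine ⟨fun q => (Equiv.ofBijective (decode X q) ⟨decode_inj X q, decode_surj X q⟩).symm,
    ?_, ?_, ?_⟩
  · intro q i x
    rw [Equiv.symm_apply_eq]
    conv_lhs => rw [← Equiv.apply_symm_apply
      (Equiv.ofBijective (decode X q) ⟨decode_inj X q, decode_surj X q⟩) x]
    generalize (Equiv.ofBijective (decode X q) ⟨decode_inj X q, decode_surj X q⟩).symm x = s
    match s with
    | Sum.inl c =>
      show X.δ i (decode X q (Sum.inl c)) = decode X (q + 1) (Sum.inl c)
      simp only [decode]
      show X.map (SimplexCategory.δ i) (X.map (SimplexCategory.const _ _ 0) c.1) = _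
      rw [← FunctorToTypes.map_comp_apply (F := X)]
      exact map_const_eq X c.1 c.2 _ _
    | Sum.inr ⟨g, φ⟩ =>
      show X.δ i (decode X q (Sum.inr ⟨g, φ⟩)) =
        decode X (q + 1) (Sum.inr ⟨g, φ.trans (Fin.succAboveOrderEmb i)⟩)
      simp only [decode]
      show X.map (SimplexCategory.δ i) (X.map (emb2hom φ) g.1.2) = _
      rw [← FunctorToTypes.map_comp_apply (F := X), ← emb2hom_trans]
  · intro c
    rw [Equiv.symm_apply_eq]
    show c.1 = X.map (SimplexCategory.const _ _ 0) c.1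
    have : (SimplexCategory.const ⦋0⦌ ⦋0⦌ 0) = 𝟙 _ := SimplexCategory.const_eq_id
    rw [this, FunctorToTypes.map_id_apply (F := X)]
  · intro g
    rw [Equiv.symm_apply_eq]
    show g.1.2 = X.map (emb2hom ((OrderIso.refl (Fin (g.1.1 + 1))).toOrderEmbedding)) g.1.2
    rw [emb2hom_refl, FunctorToTypes.map_id_apply (F := X)]
end
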